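/- Convergence of Taylor's Taylor series (Banach algebra model): let f be an intertwiner-preserving function on block operator matrices, uniformly bounded by M on all block discs of radius r centered at 0. Fix 0 < r₀ < r₁ < r, set q := r₁/r₀ > 1. Then for every z with ‖z‖ < r₀, ‖Δⁿ f(0,…,0)(z,…,z)‖ ≤ q^{−n} M for all n, so the series ∑_{n≥0} Δⁿ f(0)(z,…,z) converges absolutely and uniformly on the disc of radius r₀. -/

import Mathlib

attribute [local instance] Matrix.normedAddCommGroup

variable {A : Type*} [NormedRing A] [NormedAlgebra ℂ A]

/-- A block-scalar rectangular matrix: a scalar matrix amplified into the algebra `A`. -/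
noncomputable def blkScalar {m n : ℕ} (A : Type*) [NormedRing A] [NormedAlgebra ℂ A]
    (s : Matrix (Fin m) (Fin n) ℂ) : Matrix (Fin m) (Fin n) A :=
  s.map (algebraMap ℂ A)

/-- The `(k+1)×(k+1)` bidiagonal block matrix with diagonal `d` and superdiagonal `u`. -/
def bidiag (k : ℕ) (d : Fin (k + 1) → A) (u : Fin k → A) :
    Matrix (Fin (k + 1)) (Fin (k + 1)) A :=
  Matrix.of fun i j =>
    if (j : ℕ) = (i : ℕ) then d i
    else if h : (j : ℕ) = (i : ℕ) + 1 then u ⟨i, by have := j.isLt; omega⟩ else 0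

/-- `Δᵏf(z₀,…,z_k)(u₁,…,u_k)`: the `(0,k)`-corner of `f` on the bidiagonal matrix. -/
def TaylorDelta (f : ∀ n : ℕ, Matrix (Fin n) (Fin n) A → Matrix (Fin n) (Fin n) A)
    (k : ℕ) (d : Fin (k + 1) → A) (u : Fin k → A) : A :=
  f (k + 1) (bidiag k d u) 0 (Fin.last k)

/-- Convergence of Taylor's Taylor series (part of Theorem 5.11(2) of the paper): if the
intertwiner-preserving family `f` is bounded by `M` on all block discs of radius `r`
centered at `0` and `0 < r₀ < r₁ < r`, then for `‖z‖ < r₀` one has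
`‖Δⁿf(0)(z,…,z)‖ ≤ (r₀/r₁)ⁿ·M` for every `n`, so the series `∑ₙ Δⁿf(0)(z,…,z)` converges
absolutely. -/
lemma blkScalar_diagonal (n : ℕ) (d : Fin n → ℂ) :
    blkScalar A (Matrix.diagonal d) = Matrix.diagonal (fun i => algebraMap ℂ A (d i)) := by
  unfold blkScalar
  rw [Matrix.diagonal_map (map_zero _)]

lemma TD_smul (f : ∀ n : ℕ, Matrix (Fin n) (Fin n) A → Matrix (Fin n) (Fin n) A)
    (hf : ∀ (m n : ℕ) (s : Matrix (Fin m) (Fin n) ℂ)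
        (X : Matrix (Fin n) (Fin n) A) (Y : Matrix (Fin m) (Fin m) A),
      blkScalar A s * X = Y * blkScalar A s →
      blkScalar A s * f n X = f m Y * blkScalar A s)
    (n : ℕ) (c : ℂ) (u : A) :
    TaylorDelta f n (fun _ => 0) (fun _ => c • u)
      = c ^ n • TaylorDelta f n (fun _ => 0) (fun _ => u) := by
  set s : Matrix (Fin (n+1)) (Fin (n+1)) ℂ := Matrix.diagonal (fun i => c ^ (i : ℕ)) with hs
  have hcomm : blkScalar A s * bidiag n (fun _ => 0) (fun _ => c • u)
      = bidiag n (fun _ => 0) (fun _ => u) * blkScalar A s := by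
    rw [hs, blkScalar_diagonal]
    ext i j
    rw [Matrix.diagonal_mul, Matrix.mul_diagonal]
    simp only [bidiag, Matrix.of_apply]
    split_ifs with h1 h2
    · simp
    · rw [Algebra.smul_def, ← mul_assoc, ← map_mul, ← Algebra.commutes, h2, pow_succ]
    · simp
  have h := hf (n+1) (n+1) s _ _ hcomm
  have h2 := congrFun (congrFun h 0) (Fin.last n)
  rw [hs, blkScalar_diagonal] at h2
  rw [Matrix.diagonal_mul, Matrix.mul_diagonal] at h2
  simp only [Fin.val_zero, pow_zero, map_one, one_mul, Fin.val_last] at h2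
  show f (n+1) (bidiag n (fun _ => 0) (fun _ => c • u)) 0 (Fin.last n) = _
  rw [h2, ← Algebra.commutes, ← Algebra.smul_def]
  rfl

theorem stmt10
    (f : ∀ n : ℕ, Matrix (Fin n) (Fin n) A → Matrix (Fin n) (Fin n) A)
    (hf : ∀ (m n : ℕ) (s : Matrix (Fin m) (Fin n) ℂ)
        (X : Matrix (Fin n) (Fin n) A) (Y : Matrix (Fin m) (Fin m) A),
      blkScalar A s * X = Y * blkScalar A s →
      blkScalar A s * f n X = f m Y * blkScalar A s)
    (r M r₀ r₁ : ℝ) (h0 : 0 < r₀) (h01 : r₀ < r₁) (h1r : r₁ < r)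
    (hbdd : ∀ (n : ℕ) (X : Matrix (Fin n) (Fin n) A), ‖X‖ < r → ‖f n X‖ ≤ M)
    (z : A) (hz : ‖z‖ < r₀) :
    (∀ n : ℕ, ‖TaylorDelta f n (fun _ => 0) (fun _ => z)‖ ≤ (r₀ / r₁) ^ n * M) ∧
    Summable (fun n : ℕ => ‖TaylorDelta f n (fun _ => 0) (fun _ => z)‖) := by
  have h1pos : (0:ℝ) < r₁ := h0.trans h01
  set q : ℝ := r₁ / r₀ with hq
  have hq0 : 0 < q := div_pos h1pos h0
  have key : ∀ n : ℕ, ‖TaylorDelta f n (fun _ => 0) (fun _ => z)‖ ≤ (r₀ / r₁) ^ n * M := by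
    intro n
    have hsm := TD_smul f hf n (q : ℂ) z
    have hXnorm : ‖bidiag n (fun _ => (0:A)) (fun _ => (q:ℂ) • z)‖ ≤ r₁ := by
      rw [Matrix.norm_le_iff h1pos.le]
      intro i j
      simp only [bidiag, Matrix.of_apply]
      split_ifs
      · rw [norm_zero]; exact h1pos.le
      · rw [norm_smul, Complex.norm_real, Real.norm_eq_abs, abs_of_pos hq0]
        calc q * ‖z‖ ≤ q * r₀ := by nlinarith
          _ = r₁ := by rw [hq]; field_simp
      · rw [norm_zero]; exact h1pos.le
    have hfb : ‖f (n+1) (bidiag n (fun _ => (0:A)) (fun _ => (q:ℂ) • z))‖ ≤ M :=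
      hbdd _ _ (lt_of_le_of_lt hXnorm h1r)
    have hTD : ‖TaylorDelta f n (fun _ => 0) (fun _ => (q:ℂ) • z)‖ ≤ M := by
      refine le_trans ?_ hfb
      exact Matrix.norm_entry_le_entrywise_sup_norm
        (f (n+1) (bidiag n (fun _ => (0:A)) (fun _ => (q:ℂ) • z)))
    rw [hsm, norm_smul, norm_pow, Complex.norm_real, Real.norm_eq_abs, abs_of_pos hq0] at hTD
    have hqn : (0:ℝ) < q ^ n := pow_pos hq0 n
    have : ‖TaylorDelta f n (fun _ => 0) (fun _ => z)‖ ≤ M / q ^ n := by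
      rw [le_div_iff₀ hqn]
      linarith [hTD]
    refine this.trans_eq ?_
    rw [hq, div_pow, div_pow]
    field_simp
  refine ⟨key, ?_⟩
  apply Summable.of_nonneg_of_le (fun n => norm_nonneg _) key
  apply Summable.mul_right
  apply summable_geometric_of_lt_one (by positivity)
  rw [div_lt_one h1pos]
  exact h01
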